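/- Let C, M > 0 and define g(θ) := C·(exp(θM) − θM − 1)/M² for θ ≥ 0. Then for every x ≥ 0 the monotone conjugate g^⊙(x) := sup_{θ ≥ 0} (θx − g(θ)) equals ((x + C/M)/M)·log(1 + M·x/C) − x/M. -/

import Mathlib

theorem stmt4 (C M : ℝ) (hC : 0 < C) (hM : 0 < M) (x : ℝ) (hx : 0 ≤ x) :
    IsLUB {y : ℝ | ∃ θ : ℝ, 0 ≤ θ ∧ y = θ * x - C * (Real.exp (θ * M) - θ * M - 1) / M ^ 2}
      (((x + C / M) / M) * Real.log (1 + M * x / C) - x / M) := by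
  have hpos : (0:ℝ) < 1 + M * x / C := by positivity
  set L := Real.log (1 + M * x / C) with hL
  have hL0 : 0 ≤ L := Real.log_nonneg (by nlinarith [div_nonneg (mul_nonneg hM.le hx) hC.le])
  have hexp : Real.exp L = 1 + M * x / C := Real.exp_log hpos
  have hM2 : (0:ℝ) < M ^ 2 := by positivity
  constructor
  · rintro y ⟨θ, hθ, rfl⟩
    have h1 := Real.add_one_le_exp (θ * M - L)
    have h2 : Real.exp (θ * M) = Real.exp (θ * M - L) * (1 + M * x / C) := by
      rw [← hexp, ← Real.exp_add]; ring_nf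
    have key : (θ * M - L + 1) * (1 + M * x / C) ≤ Real.exp (θ * M) := by
      rw [h2]; exact mul_le_mul_of_nonneg_right h1 hpos.le
    have key' : C * (θ * M - L + 1) + M * x * (θ * M - L + 1) ≤ C * Real.exp (θ * M) := by
      have := mul_le_mul_of_nonneg_left key hC.le
      calc C * (θ * M - L + 1) + M * x * (θ * M - L + 1)
          = C * ((θ * M - L + 1) * (1 + M * x / C)) := by field_simp
        _ ≤ C * Real.exp (θ * M) := this
    have e1 : θ * x - C * (Real.exp (θ * M) - θ * M - 1) / M ^ 2
        = (M ^ 2 * θ * x - C * (Real.exp (θ * M) - θ * M - 1)) / M ^ 2 := by field_simp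
    have e2 : (x + C / M) / M * L - x / M = (M * x * L + C * L - M * x) / M ^ 2 := by
      field_simp
    rw [e1, e2, div_le_div_iff_of_pos_right hM2]
    nlinarith [key']
  · intro b hb
    refine hb ⟨L / M, div_nonneg hL0 hM.le, ?_⟩
    rw [div_mul_cancel₀ L hM.ne', hexp]
    field_simp
    ring
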